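/- arXiv:1609.08328 — 3 statements merged into one kernel-verified Lean document; each statement's English description precedes it below -/
import Mathlib

section
/- Let d ≥ 1, let f : ℝ^d → ℝ be continuous, let C ∈ (1/2, 1) and k > 0, and let (z_i)_{i≥0} be a sequence in ℝ^d satisfying |f(z_{i+1})| ≤ C·|f(z_i)| for all i ≥ 0 and ‖z_{i+1} − z_i‖ ≤ ‖z_i − z_{i−1}‖/2 + k·|f(z_i)| for all i ≥ 1. Then the sequence (z_i) converges to some point l ∈ ℝ^d with f(l) = 0. -/
/-- SAFIP convergence (Theorem 1, deterministic content): any infinite SAFIP chain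
for a continuous `f` with parameters `C ∈ (1/2, 1)` and `k > 0` converges to a
zero of `f`. -/
theorem safip_chain_converges_to_solution
    (d : ℕ) (hd : 1 ≤ d)
    (f : EuclideanSpace ℝ (Fin d) → ℝ) (hf : Continuous f)
    (C k : ℝ) (hC : 1/2 < C ∧ C < 1) (hk : 0 < k)
    (z : ℕ → EuclideanSpace ℝ (Fin d))
    (hchain : ∀ i : ℕ, |f (z (i + 1))| ≤ C * |f (z i)|)
    (hstep : ∀ i : ℕ, 1 ≤ i →
      ‖z (i + 1) - z i‖ ≤ ‖z i - z (i - 1)‖ / 2 + k * |f (z i)|) :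
    ∃ l : EuclideanSpace ℝ (Fin d),
      Filter.Tendsto z Filter.atTop (nhds l) ∧ f l = 0 := by
  obtain ⟨hC1, hC2⟩ := hC
  have hC0 : 0 < C := lt_trans (by norm_num) hC1
  set M : ℝ := |f (z 0)| with hM
  have hM0 : 0 ≤ M := abs_nonneg _
  -- geometric decay of |f (z n)|
  have hfn : ∀ n : ℕ, |f (z n)| ≤ C ^ n * M := by
    intro n
    induction n with
    | zero => simp [hM]
    | succ n ih =>
      calc |f (z (n + 1))| ≤ C * |f (z n)| := hchain n
        _ ≤ C * (C ^ n * M) := by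
            exact mul_le_mul_of_nonneg_left ih (le_of_lt hC0)
        _ = C ^ (n + 1) * M := by ring
  set B : ℝ := ‖z 1 - z 0‖ + k * M * C / (C - 1/2) with hB
  have hCh : 0 < C - 1/2 := by linarith
  clear_value M B
  have hB0 : 0 ≤ B := by
    have : 0 ≤ k * M * C / (C - 1/2) := by positivity
    have := norm_nonneg (z 1 - z 0)
    linarith
  -- geometric decay of step sizes
  have hstepn : ∀ n : ℕ, ‖z (n + 1) - z n‖ ≤ B * C ^ n := by
    intro n
    induction n with
    | zero =>
      have : 0 ≤ k * M * C / (C - 1/2) := by positivity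
      simpa [hB] using this
    | succ n ih =>
      have h1 := hstep (n + 1) (by omega)
      simp only [Nat.add_sub_cancel] at h1
      have h2 : |f (z (n + 1))| ≤ C ^ (n + 1) * M := hfn (n + 1)
      have hkey : k * M * C / (C - 1/2) * (C - 1/2) * C ^ n
          ≥ k * (C ^ (n + 1) * M) := by
        rw [div_mul_cancel₀ _ (ne_of_gt hCh)]
        have : k * M * C * C ^ n = k * (C ^ (n + 1) * M) := by ring
        linarith [this.ge]
      have hBC : B * C ^ n / 2 + k * (C ^ (n + 1) * M) ≤ B * C ^ (n + 1) := by
        have hCn : (0:ℝ) ≤ C ^ n := le_of_lt (pow_pos hC0 n)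
        have hBB : B * (C - 1/2) * C ^ n ≥ k * M * C / (C - 1/2) * (C - 1/2) * C ^ n := by
          apply mul_le_mul_of_nonneg_right _ hCn
          apply mul_le_mul_of_nonneg_right _ (le_of_lt hCh)
          have := norm_nonneg (z 1 - z 0)
          simp only [hB]; linarith
        have heq : B * C ^ (n+1) - B * C ^ n / 2 = B * (C - 1/2) * C ^ n := by ring
        linarith
      calc ‖z (n + 1 + 1) - z (n + 1)‖
          ≤ ‖z (n + 1) - z n‖ / 2 + k * |f (z (n + 1))| := h1
        _ ≤ B * C ^ n / 2 + k * (C ^ (n + 1) * M) := by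
            have := mul_le_mul_of_nonneg_left h2 (le_of_lt hk)
            linarith
        _ ≤ B * C ^ (n + 1) := hBC
  -- Cauchy
  have hcauchy : CauchySeq z := by
    apply cauchySeq_of_le_geometric C B hC2
    intro n
    rw [dist_eq_norm, norm_sub_rev]
    exact hstepn n
  obtain ⟨l, hl⟩ := cauchySeq_tendsto_of_complete hcauchy
  refine ⟨l, hl, ?_⟩
  have h1 : Filter.Tendsto (fun n => f (z n)) Filter.atTop (nhds (f l)) :=
    (hf.continuousAt.tendsto).comp hl
  have h2 : Filter.Tendsto (fun n : ℕ => C ^ n * M) Filter.atTop (nhds 0) := by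
    have := tendsto_pow_atTop_nhds_zero_of_lt_one (le_of_lt hC0) hC2
    simpa using this.mul_const M
  have h3 : Filter.Tendsto (fun n => f (z n)) Filter.atTop (nhds 0) := by
    apply squeeze_zero_norm _ h2
    intro n
    simpa [Real.norm_eq_abs] using hfn n
  exact tendsto_nhds_unique h1 h3
end

section
/- Let d ≥ 1, let f : ℝ^d → ℝ, let x, z_0 ∈ ℝ^d with f(x) = 0 and ‖x − z_0‖ = ε_0 > 0, let k > k_1 > 0 with k_1·|f(z_0)| < 2·ε_0 and f(z_0) ≠ 0, let R_0 > 0, and let m > 0 with m·k_1 < 1/2. Assume that every z in the set E = {z : k_1·|f(z_0)| ≤ ‖z − z_0‖ ≤ R_0/2 + k·|f(z_0)|} with ‖z − x‖ < ε_0 satisfies |f(z_0)| − |f(z)| ≥ m·‖z − z_0‖. Then there exists z_1 ∈ ℝ^d with ‖z_1 − x‖ < ε_0, k_1·|f(z_0)| ≤ ‖z_1 − z_0‖ ≤ R_0/2 + k·|f(z_0)|, and |f(z_1)| ≤ (1 − m·k_1)·|f(z_0)|. -/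
/-- Key inductive step of the proof of Theorem 2: near a solution `x` of
`f(x) = 0`, under the local growth condition, a chain point `z_0` at distance
`ε_0` from `x` admits an eligible offspring `z_1`. -/
theorem safip_exists_offspring
    (d : ℕ) (hd : 1 ≤ d)
    (f : EuclideanSpace ℝ (Fin d) → ℝ)
    (x z0 : EuclideanSpace ℝ (Fin d)) (ε0 k k1 R0 m : ℝ)
    (hfx : f x = 0) (hε0 : 0 < ε0) (hxz0 : ‖x - z0‖ = ε0)
    (hk1 : 0 < k1) (hkk1 : k1 < k) (hk1f : k1 * |f z0| < 2 * ε0)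
    (hfz0 : f z0 ≠ 0) (hR0 : 0 < R0) (hm : 0 < m) (hmk1 : m * k1 < 1/2)
    (hgrowth : ∀ z : EuclideanSpace ℝ (Fin d),
      k1 * |f z0| ≤ ‖z - z0‖ → ‖z - z0‖ ≤ R0 / 2 + k * |f z0| →
      ‖z - x‖ < ε0 → |f z0| - |f z| ≥ m * ‖z - z0‖) :
    ∃ z1 : EuclideanSpace ℝ (Fin d),
      ‖z1 - x‖ < ε0 ∧
      k1 * |f z0| ≤ ‖z1 - z0‖ ∧ ‖z1 - z0‖ ≤ R0 / 2 + k * |f z0| ∧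
      |f z1| ≤ (1 - m * k1) * |f z0| := by
  have hfz0' : 0 < |f z0| := abs_pos.mpr hfz0
  set t : ℝ := k1 * |f z0| / ε0 with ht
  have ht0 : 0 < t := div_pos (mul_pos hk1 hfz0') hε0
  have ht2 : t < 2 := by
    rw [ht, div_lt_iff₀ hε0]; linarith
  set z1 : EuclideanSpace ℝ (Fin d) := z0 + t • (x - z0) with hz1
  have hz1z0 : z1 - z0 = t • (x - z0) := by simp [hz1]
  have hnz1z0 : ‖z1 - z0‖ = k1 * |f z0| := by
    rw [hz1z0, norm_smul, hxz0, Real.norm_eq_abs, abs_of_pos ht0, ht,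
      div_mul_cancel₀ _ (ne_of_gt hε0)]
  have hz1x : z1 - x = (t - 1) • (x - z0) := by
    rw [hz1]; module
  have hnz1x : ‖z1 - x‖ < ε0 := by
    rw [hz1x, norm_smul, hxz0, Real.norm_eq_abs]
    have : |t - 1| < 1 := abs_lt.mpr ⟨by linarith, by linarith⟩
    nlinarith
  have h1 : k1 * |f z0| ≤ ‖z1 - z0‖ := le_of_eq hnz1z0.symm
  have h2 : ‖z1 - z0‖ ≤ R0 / 2 + k * |f z0| := by
    rw [hnz1z0]; nlinarith
  have hg := hgrowth z1 h1 h2 hnz1x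
  refine ⟨z1, hnz1x, h1, h2, ?_⟩
  rw [hnz1z0] at hg; nlinarith
end

section
/- Let d ≥ 1, let f : ℝ^d → ℝ and g : ℝ^d → ℝ be continuous, let C ∈ (1/2, 1) and k > 0, and let (z_i)_{i≥0} be a sequence in ℝ^d satisfying max(|f(z_{i+1})|, |g(z_{i+1})|) ≤ C·max(|f(z_i)|, |g(z_i)|) for all i ≥ 0 and ‖z_{i+1} − z_i‖ ≤ ‖z_i − z_{i−1}‖/2 + k·max(|f(z_i)|, |g(z_i)|) for all i ≥ 1. Then the sequence (z_i) converges to some point l ∈ ℝ^d with f(l) = 0 and g(l) = 0. -/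
/-- SAFIP for simultaneous inverse problems (Section 3): a chain satisfying the
modified conditions with `max(|f|, |g|)` converges to a common zero of `f`
and `g`. -/
theorem safip_simultaneous_chain_converges
    (d : ℕ) (hd : 1 ≤ d)
    (f g : EuclideanSpace ℝ (Fin d) → ℝ) (hf : Continuous f) (hg : Continuous g)
    (C k : ℝ) (hC : 1/2 < C ∧ C < 1) (hk : 0 < k)
    (z : ℕ → EuclideanSpace ℝ (Fin d))
    (hchain : ∀ i : ℕ,
      max |f (z (i + 1))| |g (z (i + 1))| ≤ C * max |f (z i)| |g (z i)|)
    (hstep : ∀ i : ℕ, 1 ≤ i →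
      ‖z (i + 1) - z i‖ ≤ ‖z i - z (i - 1)‖ / 2 + k * max |f (z i)| |g (z i)|) :
    ∃ l : EuclideanSpace ℝ (Fin d),
      Filter.Tendsto z Filter.atTop (nhds l) ∧ f l = 0 ∧ g l = 0 := by
  obtain ⟨hC1, hC2⟩ := hC
  have hC0 : (0:ℝ) < C := by linarith
  set M : ℕ → ℝ := fun i => max |f (z i)| |g (z i)| with hMdef
  have hMf : ∀ i, |f (z i)| ≤ M i := fun i => le_max_left _ _
  have hMg : ∀ i, |g (z i)| ≤ M i := fun i => le_max_right _ _
  have hMapp : ∀ i, M i = max |f (z i)| |g (z i)| := fun i => by rw [hMdef]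
  clear_value M
  simp only [← hMapp] at hchain hstep
  have hM0 : ∀ i, 0 ≤ M i := fun i => le_trans (abs_nonneg _) (hMf i)
  have hMgeo : ∀ i, M i ≤ C ^ i * M 0 := by
    intro i
    induction i with
    | zero => simp
    | succ n ih =>
      calc M (n+1) ≤ C * M n := hchain n
        _ ≤ C * (C ^ n * M 0) := by nlinarith [hM0 n]
        _ = C ^ (n+1) * M 0 := by ring
  set A : ℝ := ‖z 1 - z 0‖ + k * M 0 * C / (C - 1/2) with hAdef
  have hden : (0:ℝ) < C - 1/2 := by linarith
  have hA2 : 0 ≤ k * M 0 * C / (C - 1/2) :=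
    div_nonneg (mul_nonneg (mul_nonneg hk.le (hM0 0)) hC0.le) hden.le
  clear_value A
  have hb : ∀ n, ‖z (n+1) - z n‖ ≤ A * C ^ n := by
    intro n
    induction n with
    | zero =>
      simp only [pow_zero, mul_one, hAdef]
      linarith
    | succ n ih =>
      have hs := hstep (n+1) (by omega)
      simp only [Nat.add_sub_cancel] at hs
      have hkey : A / 2 + k * M 0 * C ≤ A * C := by
        have : A * (C - 1/2) ≥ k * M 0 * C := by
          rw [hAdef]
          have : k * M 0 * C / (C - 1/2) * (C - 1/2) = k * M 0 * C :=
            div_mul_cancel₀ _ (ne_of_gt hden)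
          nlinarith [norm_nonneg (z 1 - z 0)]
        linarith
      have hpow : (0:ℝ) ≤ C ^ n := by positivity
      calc ‖z (n+1+1) - z (n+1)‖ ≤ ‖z (n+1) - z n‖ / 2 + k * M (n+1) := hs
        _ ≤ A * C ^ n / 2 + k * (C ^ (n+1) * M 0) := by
            have h2 := mul_le_mul_of_nonneg_left (hMgeo (n+1)) hk.le
            linarith
        _ = (A / 2 + k * M 0 * C) * C ^ n := by ring
        _ ≤ (A * C) * C ^ n := by nlinarith
        _ = A * C ^ (n+1) := by ring
  have hcauchy : CauchySeq z := by
    apply cauchySeq_of_le_geometric C A hC2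
    intro n
    rw [dist_eq_norm, norm_sub_rev]
    exact hb n
  obtain ⟨l, hl⟩ := cauchySeq_tendsto_of_complete hcauchy
  refine ⟨l, hl, ?_, ?_⟩
  · have hM_to_zero : Filter.Tendsto M Filter.atTop (nhds 0) := by
      have hgeo : Filter.Tendsto (fun n => C ^ n * M 0) Filter.atTop (nhds 0) := by
        have := (tendsto_pow_atTop_nhds_zero_of_lt_one hC0.le hC2).mul_const (M 0)
        simpa using this
      exact squeeze_zero hM0 hMgeo hgeo
    have hfz : Filter.Tendsto (fun n => f (z n)) Filter.atTop (nhds 0) := by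
      refine squeeze_zero_norm (fun n => ?_) hM_to_zero
      exact hMf n
    have := (hf.continuousAt (x := l)).tendsto.comp hl
    exact tendsto_nhds_unique this hfz
  · have hM_to_zero : Filter.Tendsto M Filter.atTop (nhds 0) := by
      have hgeo : Filter.Tendsto (fun n => C ^ n * M 0) Filter.atTop (nhds 0) := by
        have := (tendsto_pow_atTop_nhds_zero_of_lt_one hC0.le hC2).mul_const (M 0)
        simpa using this
      exact squeeze_zero hM0 hMgeo hgeo
    have hgz : Filter.Tendsto (fun n => g (z n)) Filter.atTop (nhds 0) := by
      refine squeeze_zero_norm (fun n => ?_) hM_to_zero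
      exact hMg n
    have := (hg.continuousAt (x := l)).tendsto.comp hl
    exact tendsto_nhds_unique this hgz
end
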